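/- Let Δ > 0 and W > 0 satisfy W < 1/(2Δ), and let C₀ be a nonzero complex number. Let h : ℝ → ℂ be a Schwartz function whose Fourier transform 𝓕h vanishes for all f with |f| ≥ W. Let V : ℝ → ℂ be an integrable bounded function with V(f) = C₀ for all |f| ≤ W and V(f) = 0 for all |f| ≥ 1/Δ − W, and define v : ℝ → ℂ by v(t) = ∫_ℝ V(f) e^{2πi f t} df. Then for every t ∈ ℝ, h(t) = ∑_{n ∈ ℤ} (Δ/C₀) · h(nΔ) · v(t − nΔ), where the series converges absolutely. -/

import Mathlib

open MeasureTheory Complex Real FourierTransform Filter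

lemma schwartz_decay_bound (h : SchwartzMap ℝ ℂ) :
    ∃ C : ℝ, 0 < C ∧ ∀ x : ℝ, x ≠ 0 → ‖h x‖ ≤ C * |x| ^ (-2 : ℝ) := by
  obtain ⟨C, hC, hbd⟩ := h.decay 2 0
  refine ⟨C, hC, fun x hx => ?_⟩
  have h2 := hbd x
  rw [norm_iteratedFDeriv_zero] at h2
  have hx2 : (0:ℝ) < |x| ^ (2:ℕ) := by positivity
  have key : ‖h x‖ ≤ C * (|x| ^ (2:ℕ))⁻¹ := by
    rw [← div_eq_mul_inv, le_div_iff₀ hx2]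
    calc ‖h x‖ * |x| ^ (2:ℕ) = ‖x‖ ^ (2:ℕ) * ‖h x‖ := by rw [Real.norm_eq_abs]; ring
      _ ≤ C := h2
  have : |x| ^ (-2:ℝ) = (|x| ^ (2:ℕ))⁻¹ := by
    rw [← Real.rpow_natCast |x| 2, ← Real.rpow_neg (abs_nonneg x)]; norm_num
  rw [this]; exact key

lemma summable_samples (h : SchwartzMap ℝ ℂ) (Δ : ℝ) (hΔ : 0 < Δ) :
    Summable fun n : ℤ => ‖h ((n : ℝ) * Δ)‖ := by
  obtain ⟨C, hC, hbd⟩ := schwartz_decay_bound h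
  have hsum : Summable fun n : ℤ => C * |Δ| ^ (-2:ℝ) * |(n:ℝ)| ^ (-2:ℝ) :=
    (Real.summable_abs_int_rpow one_lt_two).mul_left _
  refine Summable.of_norm_bounded_eventually hsum ?_
  have : {(0:ℤ)}ᶜ ∈ Filter.cofinite := (Set.finite_singleton 0).compl_mem_cofinite
  filter_upwards [this] with n hn
  have hn0 : (n:ℝ) ≠ 0 := by
    simpa using (by simpa using hn : n ≠ 0)
  have h1 : ((n:ℝ) * Δ) ≠ 0 := mul_ne_zero hn0 hΔ.ne'
  have := hbd ((n:ℝ) * Δ) h1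
  rw [norm_norm]
  calc ‖h ((n:ℝ)*Δ)‖ ≤ C * |(n:ℝ)*Δ| ^ (-2:ℝ) := this
    _ = C * |Δ| ^ (-2:ℝ) * |(n:ℝ)| ^ (-2:ℝ) := by
        rw [abs_mul, Real.mul_rpow (abs_nonneg _) (abs_nonneg _)]; ring

lemma fourier_dilate_modulate (h : SchwartzMap ℝ ℂ) (Δ : ℝ) (hΔ : 0 < Δ) (f ξ : ℝ) :
    𝓕 (fun x : ℝ => h (Δ * x) * Complex.exp ((-2 * π * (f * Δ) * x : ℝ) * Complex.I)) ξ
      = ((Δ : ℂ))⁻¹ * 𝓕 (⇑h) (f + ξ / Δ) := by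
  rw [Real.fourier_real_eq_integral_exp_smul, Real.fourier_real_eq_integral_exp_smul]
  have key : ∀ x : ℝ,
      Complex.exp ((-2 * π * x * ξ : ℝ) * Complex.I) •
        (h (Δ * x) * Complex.exp ((-2 * π * (f * Δ) * x : ℝ) * Complex.I))
      = (fun y : ℝ => h y * Complex.exp ((-2 * π * y * (f + ξ / Δ) : ℝ) * Complex.I)) (Δ * x) := by
    intro x
    have harg : ((-2 * π * (f * Δ) * x : ℝ) : ℂ) * Complex.I + ((-2 * π * x * ξ : ℝ) : ℂ) * Complex.I
        = ((-2 * π * (Δ * x) * (f + ξ / Δ) : ℝ) : ℂ) * Complex.I := by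
      rw [← add_mul, ← Complex.ofReal_add]
      congr 2
      field_simp
      ring
    simp only [smul_eq_mul]
    calc Complex.exp ((-2 * π * x * ξ : ℝ) * Complex.I) *
          (h (Δ * x) * Complex.exp ((-2 * π * (f * Δ) * x : ℝ) * Complex.I))
        = h (Δ * x) * (Complex.exp ((-2 * π * (f * Δ) * x : ℝ) * Complex.I) *
            Complex.exp ((-2 * π * x * ξ : ℝ) * Complex.I)) := by ring
      _ = h (Δ * x) * Complex.exp ((-2 * π * (Δ * x) * (f + ξ / Δ) : ℝ) * Complex.I) := by
          rw [← Complex.exp_add, harg]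
  simp_rw [key]
  rw [MeasureTheory.Measure.integral_comp_mul_left
    (fun y : ℝ => h y * Complex.exp ((-2 * π * y * (f + ξ / Δ) : ℝ) * Complex.I)) Δ]
  rw [abs_inv, abs_of_pos hΔ]
  rw [Complex.real_smul]
  push_cast
  congr 1
  apply MeasureTheory.integral_congr_ae
  filter_upwards with y
  rw [smul_eq_mul, mul_comm]

lemma poisson_core (Δ W : ℝ) (hΔ : 0 < Δ) (hW : 0 < W)
    (h : SchwartzMap ℝ ℂ)
    (hband : ∀ f : ℝ, W ≤ |f| → 𝓕 (⇑h) f = 0)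
    (f : ℝ) (hf : |f| < 1 / Δ - W) :
    ∑' n : ℤ, h ((n : ℝ) * Δ) * Complex.exp ((-2 * π * (f * Δ) * (n : ℝ) : ℝ) * Complex.I)
      = ((Δ : ℂ))⁻¹ * 𝓕 (⇑h) f := by
  set g : ℝ → ℂ := fun x => h (Δ * x) * Complex.exp ((-2 * π * (f * Δ) * x : ℝ) * Complex.I) with hg
  have hgc : Continuous g := by
    apply h.continuous.comp (continuous_const.mul continuous_id) |>.mul
    exact Complex.continuous_exp.comp (by fun_prop)
  -- bigO of g
  have hne : ∀ᶠ x : ℝ in Filter.cocompact ℝ, x ≠ 0 := by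
    have : {(0:ℝ)}ᶜ ∈ Filter.cocompact ℝ :=
      Filter.mem_cocompact.2 ⟨{0}, isCompact_singleton, le_refl _⟩
    filter_upwards [this] with x hx
    simpa using hx
  obtain ⟨C, hC, hbd⟩ := schwartz_decay_bound h
  have hgO : g =O[Filter.cocompact ℝ] fun x : ℝ => |x| ^ (-2:ℝ) := by
    rw [Asymptotics.isBigO_iff]
    refine ⟨C * |Δ| ^ (-2:ℝ), ?_⟩
    filter_upwards [hne] with x hx
    have h1 : Δ * x ≠ 0 := mul_ne_zero hΔ.ne' hx
    have : ‖g x‖ = ‖h (Δ * x)‖ := by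
      rw [hg, norm_mul, Complex.norm_exp_ofReal_mul_I, mul_one]
    rw [this, Real.norm_eq_abs, _root_.abs_of_nonneg (Real.rpow_nonneg (abs_nonneg _) _)]
    calc ‖h (Δ * x)‖ ≤ C * |Δ * x| ^ (-2:ℝ) := hbd _ h1
      _ = C * |Δ| ^ (-2:ℝ) * |x| ^ (-2:ℝ) := by
          rw [abs_mul, Real.mul_rpow (abs_nonneg _) (abs_nonneg _)]; ring
  -- Fourier transform of g
  have hFg : ∀ ξ : ℝ, 𝓕 g ξ = ((Δ : ℂ))⁻¹ * 𝓕 (⇑h) (f + ξ / Δ) :=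
    fun ξ => fourier_dilate_modulate h Δ hΔ f ξ
  -- 𝓕 g vanishes for |ξ| ≥ R
  set R : ℝ := Δ * (W + |f|) with hR
  have hFg0 : ∀ ξ : ℝ, R ≤ |ξ| → 𝓕 g ξ = 0 := by
    intro ξ hξ
    rw [hFg ξ, hband (f + ξ / Δ), mul_zero]
    have h1 : |ξ| / Δ - |f| ≥ W := by
      rw [ge_iff_le, le_sub_iff_add_le, le_div_iff₀ hΔ]
      calc (W + |f|) * Δ = R := by rw [hR]; ring
        _ ≤ |ξ| := hξ
    calc W ≤ |ξ| / Δ - |f| := h1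
      _ = |ξ / Δ| - |f| := by rw [abs_div, abs_of_pos hΔ]
      _ ≤ |f + ξ / Δ| := by
          have h3 := abs_add_le (f + ξ / Δ) (-f)
          have he : f + ξ / Δ + -f = ξ / Δ := by ring
          rw [he, abs_neg] at h3
          linarith
  have hFgO : (𝓕 g) =O[Filter.cocompact ℝ] fun x : ℝ => |x| ^ (-2:ℝ) := by
    rw [Asymptotics.isBigO_iff]
    refine ⟨0, ?_⟩
    have hmem : {x : ℝ | R ≤ |x|} ∈ Filter.cocompact ℝ := by
      refine Filter.mem_cocompact.2 ⟨Set.Icc (-R) R, isCompact_Icc, fun x hx => ?_⟩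
      simp only [Set.mem_compl_iff, Set.mem_Icc, not_and_or, not_le] at hx
      rcases hx with hx | hx
      · exact le_trans (by linarith) (neg_le_abs x)
      · exact le_trans hx.le (le_abs_self x)
    filter_upwards [hmem] with x hx
    rw [hFg0 x hx, norm_zero, zero_mul]
  have P := Real.tsum_eq_tsum_fourier_of_rpow_decay hgc one_lt_two hgO hFgO 0
  simp only [zero_add] at P
  have hL : ∑' n : ℤ, g ((n:ℝ)) = ∑' n : ℤ, h ((n : ℝ) * Δ) *
      Complex.exp ((-2 * π * (f * Δ) * (n : ℝ) : ℝ) * Complex.I) := by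
    apply tsum_congr; intro n; rw [hg]; simp only; rw [mul_comm Δ ((n:ℝ))]
  have hRlt : R < 1 := by
    have : |f| < 1/Δ - W := hf
    calc R = Δ * (W + |f|) := hR
      _ < Δ * (W + (1/Δ - W)) := by
          apply mul_lt_mul_of_pos_left _ hΔ
          linarith
      _ = 1 := by field_simp; ring
  have hRHS : ∑' n : ℤ, 𝓕 g (n:ℝ) * (fourier n (0 : UnitAddCircle)) = ((Δ : ℂ))⁻¹ * 𝓕 (⇑h) f := by
    rw [tsum_eq_single 0]
    · simp [hFg 0, zero_div, add_zero]
    · intro n hn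
      have h1 : (1:ℝ) ≤ |(n:ℝ)| := by
        rw [← Int.cast_abs]
        exact_mod_cast Int.one_le_abs (by simpa using hn)
      rw [hFg0 (n:ℝ) (le_trans hRlt.le h1), zero_mul]
  rw [← hL, P, ← hRHS]
  apply tsum_congr; intro n
  norm_cast


/-- Lemma 1 of the paper: a bandlimited `T`-orthogonal pulse `h` can be expanded as
`h(t) = ∑ₙ (Δ/C₀) h(nΔ) v(t - nΔ)` where `v` is the inverse Fourier transform of a
function `V` which is flat (equal to `C₀`) on the band `[-W, W]` of `h` and vanishes
outside `|f| < 1/Δ - W`. -/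
theorem ftn_orthonormal_expansion
    (Δ W : ℝ) (hΔ : 0 < Δ) (hW : 0 < W) (hWΔ : W < 1 / (2 * Δ))
    (C₀ : ℂ) (hC₀ : C₀ ≠ 0)
    (h : SchwartzMap ℝ ℂ)
    (hband : ∀ f : ℝ, W ≤ |f| → 𝓕 (⇑h) f = 0)
    (V : ℝ → ℂ) (hVint : Integrable V)
    (hVbdd : ∃ M : ℝ, ∀ f : ℝ, ‖V f‖ ≤ M)
    (hVC : ∀ f : ℝ, |f| ≤ W → V f = C₀)
    (hV0 : ∀ f : ℝ, 1 / Δ - W ≤ |f| → V f = 0)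
    (v : ℝ → ℂ)
    (hv : ∀ t : ℝ, v t = ∫ f : ℝ, V f * Complex.exp (2 * Real.pi * Complex.I * f * t)) :
    ∀ t : ℝ,
      Summable (fun n : ℤ => ‖((Δ : ℂ) / C₀) * h ((n : ℝ) * Δ) * v (t - (n : ℝ) * Δ)‖) ∧
      h t = ∑' n : ℤ, ((Δ : ℂ) / C₀) * h ((n : ℝ) * Δ) * v (t - (n : ℝ) * Δ) := by
  intro t
  have hΔℂ : (Δ : ℂ) ≠ 0 := by exact_mod_cast hΔ.ne'
  set B : ℝ := ∫ f : ℝ, ‖V f‖ with hB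
  have hexp : ∀ f s : ℝ, Complex.exp (2 * (π:ℂ) * Complex.I * (f:ℂ) * (s:ℂ))
      = Complex.exp ((↑(2 * π * f * s) : ℂ) * Complex.I) := by
    intro f s; congr 1; push_cast; ring
  have hnorm_exp : ∀ r : ℝ, ‖Complex.exp ((r:ℂ) * Complex.I)‖ = 1 :=
    fun r => Complex.norm_exp_ofReal_mul_I r
  have hv' : ∀ s : ℝ, v s = ∫ f : ℝ, V f * Complex.exp ((↑(2 * π * f * s) : ℂ) * Complex.I) := by
    intro s; rw [hv s]
    exact integral_congr_ae (Filter.Eventually.of_forall fun f => by simp only [hexp])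
  have hvb : ∀ s : ℝ, ‖v s‖ ≤ B := by
    intro s; rw [hv' s]
    refine le_trans (norm_integral_le_integral_norm _) (le_of_eq ?_)
    rw [hB]
    exact integral_congr_ae (Filter.Eventually.of_forall fun f => by
      simp only [norm_mul, hnorm_exp, mul_one])
  have hsum0 : Summable fun n : ℤ => ‖h ((n:ℝ) * Δ)‖ := summable_samples h Δ hΔ
  have hsummable : Summable (fun n : ℤ => ‖((Δ : ℂ) / C₀) * h ((n : ℝ) * Δ) * v (t - (n : ℝ) * Δ)‖) := by
    refine Summable.of_nonneg_of_le (fun n => norm_nonneg _) (fun n => ?_)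
      ((hsum0.mul_left (‖(Δ:ℂ)/C₀‖)).mul_right B)
    rw [norm_mul, norm_mul]
    have h1 : ‖v (t - (n:ℝ)*Δ)‖ ≤ B := hvb _
    have h2 : (0:ℝ) ≤ ‖(Δ:ℂ)/C₀‖ * ‖h ((n:ℝ)*Δ)‖ := by positivity
    exact mul_le_mul_of_nonneg_left h1 h2
  refine ⟨hsummable, ?_⟩
  set F : ℤ → ℝ → ℂ := fun n f => ((Δ:ℂ)/C₀) * h ((n:ℝ)*Δ) *
    (V f * Complex.exp ((↑(2 * π * f * (t - (n:ℝ)*Δ)) : ℂ) * Complex.I)) with hF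
  have hmeas : ∀ s : ℝ, AEStronglyMeasurable
      (fun f : ℝ => V f * Complex.exp ((↑(2 * π * f * s) : ℂ) * Complex.I)) volume :=
    fun s => hVint.aestronglyMeasurable.mul (Continuous.aestronglyMeasurable (by fun_prop))
  have hVe_int : ∀ s : ℝ, Integrable (fun f : ℝ => V f * Complex.exp ((↑(2 * π * f * s) : ℂ) * Complex.I)) := by
    intro s
    refine Integrable.mono' hVint.norm (hmeas s) ?_
    filter_upwards with f
    rw [norm_mul, hnorm_exp, mul_one]
  have hFint : ∀ n, Integrable (F n) := fun n => (hVe_int _).const_mul _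
  have hFnorm : ∀ n, (∫ f : ℝ, ‖F n f‖) = ‖(Δ:ℂ)/C₀‖ * ‖h ((n:ℝ)*Δ)‖ * B := by
    intro n
    rw [hB, ← integral_const_mul]
    refine integral_congr_ae (Filter.Eventually.of_forall fun f => ?_)
    simp only [hF, norm_mul, hnorm_exp, mul_one]
  have hFsum : Summable fun n : ℤ => ∫ f : ℝ, ‖F n f‖ := by
    refine Summable.congr ((hsum0.mul_left (‖(Δ:ℂ)/C₀‖)).mul_right B) fun n => ?_
    rw [hFnorm n]
  have hswap := integral_tsum_of_summable_integral_norm hFint hFsum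
  have hterm : ∀ n : ℤ, ((Δ:ℂ)/C₀) * h ((n:ℝ)*Δ) * v (t - (n:ℝ)*Δ) = ∫ f : ℝ, F n f := by
    intro n
    rw [hv', ← integral_const_mul]
  -- pointwise identity under the integral
  have VH : ∀ f : ℝ, V f * 𝓕 (⇑h) f = C₀ * 𝓕 (⇑h) f := by
    intro f
    rcases le_total (|f|) W with hfW | hfW
    · rw [hVC f hfW]
    · rw [hband f hfW, mul_zero, mul_zero]
  have hpt : ∀ f : ℝ, ∑' n : ℤ, F n f
      = 𝓕 (⇑h) f * Complex.exp ((↑(2 * π * f * t) : ℂ) * Complex.I) := by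
    intro f
    set K : ℂ := ((Δ:ℂ)/C₀) * Complex.exp ((↑(2 * π * f * t) : ℂ) * Complex.I) * V f with hK
    have hsplit : ∀ n : ℤ, F n f
        = K * (h ((n:ℝ)*Δ) * Complex.exp ((↑(-2 * π * (f * Δ) * (n:ℝ)) : ℂ) * Complex.I)) := by
      intro n
      rw [hF, hK]
      simp only
      have harg : ((↑(2 * π * f * t) : ℂ) * Complex.I) + ((↑(-2 * π * (f * Δ) * (n:ℝ)) : ℂ) * Complex.I)
          = (↑(2 * π * f * (t - (n:ℝ)*Δ)) : ℂ) * Complex.I := by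
        rw [← add_mul, ← Complex.ofReal_add]
        congr 2
        ring
      rw [← harg, Complex.exp_add]
      ring
    rw [tsum_congr hsplit, tsum_mul_left]
    by_cases hVf : V f = 0
    · have hH : 𝓕 (⇑h) f = 0 := by
        have := VH f
        rw [hVf, zero_mul] at this
        exact (mul_eq_zero.1 this.symm).resolve_left hC₀
      rw [hK, hVf, mul_zero, zero_mul, hH, zero_mul]
    · have hfsmall : |f| < 1 / Δ - W := by
        by_contra hc
        exact hVf (hV0 f (not_lt.1 hc))
      rw [poisson_core Δ W hΔ hW h hband f hfsmall, hK]
      have : ((Δ:ℂ)/C₀) * Complex.exp ((↑(2 * π * f * t) : ℂ) * Complex.I) * V f *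
          ((Δ:ℂ)⁻¹ * 𝓕 (⇑h) f)
          = ((Δ:ℂ) * (Δ:ℂ)⁻¹ / C₀) * Complex.exp ((↑(2 * π * f * t) : ℂ) * Complex.I) *
            (V f * 𝓕 (⇑h) f) := by ring
      rw [this, VH f, mul_inv_cancel₀ hΔℂ]
      field_simp
  -- the final integral is h t by Fourier inversion
  have hFhint : Integrable (𝓕 (⇑h)) :=
    (SchwartzMap.fourierTransformCLM ℝ h).integrable.congr
      (Filter.Eventually.of_forall fun f => by rw [SchwartzMap.fourierTransformCLM_apply, SchwartzMap.fourier_coe])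
  have hfinal : (∫ f : ℝ, 𝓕 (⇑h) f * Complex.exp ((↑(2 * π * f * t) : ℂ) * Complex.I)) = h t := by
    have hinv : 𝓕⁻ (𝓕 (⇑h)) t = h t :=
      (h.integrable).fourierInv_fourier_eq hFhint h.continuous.continuousAt
    rw [← hinv, Real.fourierInv_eq']
    refine integral_congr_ae (Filter.Eventually.of_forall fun f => ?_)
    simp only [smul_eq_mul, RCLike.inner_apply, conj_trivial]
    rw [mul_comm]
    congr 2
    push_cast
    ring
  calc (h t : ℂ) = ∫ f : ℝ, 𝓕 (⇑h) f * Complex.exp ((↑(2 * π * f * t) : ℂ) * Complex.I) := hfinal.symm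
    _ = ∫ f : ℝ, ∑' n : ℤ, F n f := integral_congr_ae (Filter.Eventually.of_forall fun f => (hpt f).symm)
    _ = ∑' n : ℤ, ∫ f : ℝ, F n f := hswap.symm
    _ = ∑' n : ℤ, ((Δ:ℂ)/C₀) * h ((n:ℝ)*Δ) * v (t - (n:ℝ)*Δ) := tsum_congr fun n => (hterm n).symm
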